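/- arXiv:2204.01997 — 2 statements merged into one kernel-verified Lean document; each statement's English description precedes it below -/
import Mathlib

section
/- Let F be a dyadic local field, n an even integer ≥ 2, and c ∈ F^×/F^{×2}. Let W₁ⁿ(c) = ℍ^{(n-2)/2} ⊥ [1,-c]. If W₂ⁿ(c) denotes the other (non-isometric) n-dimensional quadratic space with the same determinant (-1)^{n/2}c (defined whenever (n,c) ≠ (2,1)), then: for c = 1 and n ≥ 4, W₂ⁿ(1) ≅ ℍ^{(n-4)/2} ⊥ [1,-Δ,π,-Δπ]; for c = Δ, W₂ⁿ(Δ) ≅ ℍ^{(n-2)/2} ⊥ [π,-Δπ]; for a unit c = δ ∉ F^{×2}∪ΔF^{×2}, W₂ⁿ(δ) ≅ ℍ^{(n-2)/2} ⊥ [δ^#, -δ^# δ]; and for c = δπ with δ a unit, W₂ⁿ(δπ) ≅ ℍ^{(n-2)/2} ⊥ [Δ, -Δδπ]. -/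
set_option linter.unusedSectionVars false


noncomputable section
open scoped Classical

/-- A normalized discrete valuation on a field, written additively with values in `ℤ ∪ {∞}`. -/
structure NormDiscValuation (F : Type*) [Field F] : Type _ where
  v : F → WithTop ℤ
  v_zero : v 0 = ⊤
  v_ne_top : ∀ x : F, x ≠ 0 → v x ≠ ⊤
  v_mul : ∀ x y : F, v (x * y) = v x + v y
  v_add : ∀ x y : F, min (v x) (v y) ≤ v (x + y)
  v_surj : ∀ k : ℤ, ∃ x : F, v x = (k : WithTop ℤ)

variable {F : Type*}

/-- The order of the relative quadratic defect: `d(c) = ord (c⁻¹ 𝔡(c))`, where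
`𝔡(c) = ⋂_{x ∈ F} (c - x²) 𝒪_F`; the order of this intersection of principal fractional
ideals is the supremum of the orders `ord ((c - x²)/c)`. -/
def relDefect [Field F] (V : NormDiscValuation F) (c : F) : WithTop ℤ :=
  ⨆ x : F, V.v ((c - x ^ 2) / c)

/-- `(a, b)_𝔭 = 1` for the Hilbert symbol: `z² = a x² + b y²` has a nontrivial solution. -/
def HilbertOne [Field F] (a b : F) : Prop := ∃ x y : F, a * x ^ 2 + b * y ^ 2 = 1

/-- The diagonal quadratic space `[w 0, …, w (n-1)]`. -/
def diagQF [Field F] (n : ℕ) (w : Fin n → F) : QuadraticMap F (Fin n → F) F :=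
  QuadraticMap.weightedSumSquares F w

/-- `Q'` is represented by `Q`: there is an injective isometry from `Q'` into `Q`. -/
def QRep [Field F] {n k : ℕ} (Q : QuadraticMap F (Fin n → F) F)
    (Q' : QuadraticMap F (Fin k → F) F) : Prop :=
  ∃ f : Q' →qᵢ Q, Function.Injective f

/-- Weights of the diagonal space `ℍ^{(n-l)/2} ⊥ [t₁,…,t_l]`, where `l` is the length of
the list `tail` (each hyperbolic plane being `[1,-1]`). -/
def padDiag [Field F] (n : ℕ) (tail : List F) : Fin n → F := fun i =>
  if (i : ℕ) < n - tail.length then (if (i : ℕ) % 2 = 0 then 1 else -1)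
  else tail.getD ((i : ℕ) - (n - tail.length)) 0

/-- `w` spans a space of determinant `D` mod squares. -/
def DetEq [Field F] {n : ℕ} (w : Fin n → F) (D : F) : Prop :=
  ∃ t : F, t ≠ 0 ∧ (∏ i, w i) = D * t ^ 2


section Aux
variable [Field F]

namespace NormDiscValuation

variable [Field F] (V : NormDiscValuation F)

lemma v_one : V.v 1 = 0 := by
  have h := V.v_mul 1 1
  rw [mul_one] at h
  have h1 : V.v 1 ≠ ⊤ := V.v_ne_top 1 one_ne_zero
  lift V.v 1 to ℤ using h1 with a ha
  have : (a : WithTop ℤ) = (a + a : ℤ) := by exact_mod_cast h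
  have : a = a + a := by exact_mod_cast this
  have : a = 0 := by omega
  simp [this]

lemma v_ne_zero {x : F} (h : V.v x ≠ ⊤) : x ≠ 0 := by
  intro h0; exact h (h0 ▸ V.v_zero)

lemma v_neg_one : V.v (-1) = 0 := by
  have h := V.v_mul (-1) (-1)
  rw [neg_one_mul, neg_neg, V.v_one] at h
  have h1 : V.v (-1 : F) ≠ ⊤ := V.v_ne_top _ (by norm_num)
  lift V.v (-1 : F) to ℤ using h1 with a ha
  have : (0 : ℤ) = a + a := by exact_mod_cast h
  have : a = 0 := by omega
  simp [this]

lemma v_neg (x : F) : V.v (-x) = V.v x := by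
  have h := V.v_mul (-1) x
  rw [neg_one_mul, V.v_neg_one, zero_add] at h
  exact h

lemma v_inv {x : F} (hx : x ≠ 0) : V.v x⁻¹ = - V.v x := by
  have h := V.v_mul x x⁻¹
  rw [mul_inv_cancel₀ hx, V.v_one] at h
  have h1 := V.v_ne_top x hx
  have h2 := V.v_ne_top x⁻¹ (inv_ne_zero hx)
  lift V.v x to ℤ using h1 with a ha
  lift V.v x⁻¹ to ℤ using h2 with b hb
  have : (0:ℤ) = a + b := by exact_mod_cast h
  have : b = -a := by omega
  rw [this]; rfl

lemma v_sq (x : F) : V.v (x ^ 2) = V.v x + V.v x := by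
  rw [sq, V.v_mul]

/-- ultrametric equality when valuations differ -/
lemma v_add_eq_left {x y : F} (h : V.v x < V.v y) : V.v (x + y) = V.v x := by
  have h1 : V.v x ≤ V.v (x + y) := le_trans (by simp [le_of_lt h]) (V.v_add x y)
  rcases lt_or_eq_of_le h1 with h2 | h2
  · exfalso
    have h3 : x = (x + y) + (-y) := by ring
    have h4 := V.v_add (x + y) (-y)
    rw [V.v_neg, ← h3] at h4
    have h5 : V.v x < min (V.v (x + y)) (V.v y) := lt_min h2 h
    exact lt_irrefl _ (lt_of_lt_of_le h5 h4)
  · exact h2.symm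

end NormDiscValuation


namespace NormDiscValuation

variable [Field F] (V : NormDiscValuation F)

lemma v_div_unit {c : F} (hc : V.v c = 0) (y : F) : V.v (y / c) = V.v y := by
  have hc0 : c ≠ 0 := V.v_ne_zero (by rw [hc]; exact (by simp : (0 : WithTop ℤ) ≠ ⊤))
  have h := V.v_mul (y / c) c
  rw [div_mul_cancel₀ _ hc0, hc, add_zero] at h
  exact h.symm

lemma exists_coe {x : F} (hx : x ≠ 0) : ∃ j : ℤ, V.v x = (j : WithTop ℤ) := by
  obtain ⟨j, hj⟩ := WithTop.ne_top_iff_exists.mp (V.v_ne_top x hx)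
  exact ⟨j, hj.symm⟩

variable {e : ℤ} (he : V.v 2 = (e : WithTop ℤ)) {Δ : F}
  (hΔu : V.v Δ = (0 : WithTop ℤ)) (hΔd : relDefect V Δ = ((2 * e : ℤ) : WithTop ℤ))

include hΔu in
lemma relDefect_eq : relDefect V Δ = ⨆ x : F, V.v (Δ - x ^ 2) := by
  unfold relDefect
  exact congrArg iSup (funext fun x => V.v_div_unit hΔu _)

include hΔu hΔd in
lemma defect_bound (x : F) : V.v (Δ - x ^ 2) ≤ ((2 * e : ℤ) : WithTop ℤ) := by
  rw [← hΔd, V.relDefect_eq hΔu]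
  exact le_ciSup (f := fun x : F => V.v (Δ - x ^ 2)) (OrderTop.bddAbove _) x

include hΔu hΔd in
lemma delta_not_sq (t : F) : Δ ≠ t ^ 2 := by
  intro h
  have := V.defect_bound hΔu hΔd t
  rw [← h, sub_self, V.v_zero] at this
  exact WithTop.coe_ne_top (top_le_iff.mp this)

include he in
lemma e_nonneg : 0 ≤ e := by
  have h := V.v_add 1 1
  rw [V.v_one, min_self] at h
  norm_num at h
  rw [he] at h
  exact_mod_cast h

include hΔu hΔd in
lemma defect_attained : ∃ x₀ : F, V.v (Δ - x₀ ^ 2) = ((2 * e : ℤ) : WithTop ℤ) := by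
  by_contra h
  push_neg at h
  have hle : relDefect V Δ ≤ ((2 * e - 1 : ℤ) : WithTop ℤ) := by
    rw [V.relDefect_eq hΔu]
    refine ciSup_le fun x => ?_
    have hb := V.defect_bound hΔu hΔd x
    have hne : V.v (Δ - x ^ 2) ≠ ⊤ := fun htop => WithTop.coe_ne_top (top_le_iff.mp (htop ▸ hb))
    obtain ⟨k, hk⟩ := WithTop.ne_top_iff_exists.mp hne
    rw [← hk] at hb ⊢
    have hk1 : k ≤ 2 * e := by exact_mod_cast hb
    have hk2 : k ≠ 2 * e := fun hh => (h x) (by rw [← hk, hh])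
    exact_mod_cast (by omega : k ≤ 2 * e - 1)
  rw [hΔd] at hle
  have : (2 * e : ℤ) ≤ 2 * e - 1 := by exact_mod_cast hle
  omega

include he hΔu hΔd in
lemma delta_even (t : F) : ∃ k : ℤ, V.v (Δ - t ^ 2) = ((2 * k : ℤ) : WithTop ℤ) := by
  by_cases ht : t = 0
  · exact ⟨0, by simp [ht, hΔu]⟩
  obtain ⟨j, hj⟩ := V.exists_coe ht
  have hts : V.v (t ^ 2) = ((2 * j : ℤ) : WithTop ℤ) := by
    rw [V.v_sq, hj]; exact_mod_cast (by push_cast; ring)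
  have hnts : V.v (-(t ^ 2)) = ((2 * j : ℤ) : WithTop ℤ) := by rw [V.v_neg, hts]
  rcases lt_trichotomy j 0 with hjn | hj0 | hjp
  · refine ⟨j, ?_⟩
    have : Δ - t ^ 2 = (-(t ^ 2)) + Δ := by ring
    rw [this, V.v_add_eq_left, hnts]
    rw [hnts, hΔu]
    exact_mod_cast (by omega : (2 * j : ℤ) < 0)
  · -- j = 0 : the hard case
    subst hj0
    rcases eq_or_lt_of_le (V.e_nonneg he) with he0 | hep
    · -- e = 0
      refine ⟨0, ?_⟩
      have hb := V.defect_bound hΔu hΔd t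
      rw [← he0] at hb
      have hge : (0 : WithTop ℤ) ≤ V.v (Δ - t ^ 2) := by
        have := V.v_add Δ (-(t ^ 2))
        rw [hΔu, hnts] at this
        simpa [sub_eq_add_neg] using le_trans (by simp) this
      simp only [mul_zero] at hb
      norm_num
      exact le_antisymm (by exact_mod_cast hb) hge
    · -- 0 < e
      obtain ⟨x₀, hx₀⟩ := V.defect_attained hΔu hΔd
      have hx₀ne : x₀ ≠ 0 := by
        intro h0
        rw [h0, zero_pow (by norm_num : (2:ℕ) ≠ 0), sub_zero, hΔu] at hx₀
        have : (0 : ℤ) = 2 * e := by exact_mod_cast hx₀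
        omega
      obtain ⟨j₀, hj₀⟩ := V.exists_coe hx₀ne
      have hx₀s : V.v (-(x₀ ^ 2)) = ((2 * j₀ : ℤ) : WithTop ℤ) := by
        rw [V.v_neg, V.v_sq, hj₀]; exact_mod_cast (by push_cast; ring)
      have hj₀0 : j₀ = 0 := by
        rcases lt_trichotomy j₀ 0 with h1 | h1 | h1
        · exfalso
          have : Δ - x₀ ^ 2 = (-(x₀ ^ 2)) + Δ := by ring
          rw [this, V.v_add_eq_left (by rw [hx₀s, hΔu]; exact_mod_cast (by omega : (2*j₀:ℤ) < 0)), hx₀s] at hx₀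
          have : (2 * j₀ : ℤ) = 2 * e := by exact_mod_cast hx₀
          omega
        · exact h1
        · exfalso
          have : Δ - x₀ ^ 2 = Δ + (-(x₀ ^ 2)) := by ring
          rw [this, V.v_add_eq_left (by rw [hx₀s, hΔu]; exact_mod_cast (by omega : (0:ℤ) < 2*j₀)), hΔu] at hx₀
          have : (0 : ℤ) = 2 * e := by exact_mod_cast hx₀
          omega
      subst hj₀0
      set s := x₀ - t with hs_def
      have hkey : Δ - t ^ 2 = (Δ - x₀ ^ 2) + s * (s + 2 * t) := by
        rw [hs_def]; ring
      by_cases hs : s = 0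
      · exact ⟨e, by rw [hkey, hs, zero_mul, add_zero, hx₀]⟩
      obtain ⟨j₂, hj₂⟩ := V.exists_coe hs
      have hj₂0 : 0 ≤ j₂ := by
        have := V.v_add x₀ (-t)
        rw [hj₀, V.v_neg, hj] at this
        have h1 : ((0:ℤ) : WithTop ℤ) ≤ V.v (x₀ + -t) := by simpa using this
        rw [(by ring : x₀ + -t = s), hj₂] at h1
        exact_mod_cast h1
      have hv2t : V.v (2 * t) = (e : WithTop ℤ) := by
        rw [V.v_mul, he, hj]; simp
      rcases le_or_gt (e : ℤ) j₂ with hcase | hcase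
      · -- big s : result = 2e
        refine ⟨e, ?_⟩
        have h1 : ((e : ℤ) : WithTop ℤ) ≤ V.v (s + 2 * t) := by
          refine le_trans ?_ (V.v_add s (2 * t))
          rw [hj₂, hv2t]
          simp only [le_min_iff]
          exact ⟨by exact_mod_cast hcase, le_refl _⟩
        have h2 : ((2 * e : ℤ) : WithTop ℤ) ≤ V.v (s * (s + 2 * t)) := by
          rw [V.v_mul, hj₂]
          calc ((2 * e : ℤ) : WithTop ℤ) = ((e : ℤ) : WithTop ℤ) + ((e : ℤ) : WithTop ℤ) := by
                exact_mod_cast (by push_cast; ring)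
            _ ≤ (j₂ : WithTop ℤ) + V.v (s + 2 * t) := by
                exact add_le_add (by exact_mod_cast hcase) h1
        have h3 : ((2 * e : ℤ) : WithTop ℤ) ≤ V.v (Δ - t ^ 2) := by
          rw [hkey]
          refine le_trans ?_ (V.v_add _ _)
          rw [hx₀]
          exact le_min (le_refl _) h2
        exact le_antisymm (V.defect_bound hΔu hΔd t) h3
      · -- small s : result = 2 j₂
        refine ⟨j₂, ?_⟩
        have h1 : V.v (s + 2 * t) = (j₂ : WithTop ℤ) := by
          rw [← hj₂]
          exact V.v_add_eq_left (by rw [hj₂, hv2t]; exact_mod_cast hcase)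
        have h2 : V.v (s * (s + 2 * t)) = ((2 * j₂ : ℤ) : WithTop ℤ) := by
          rw [V.v_mul, hj₂, h1]; exact_mod_cast (by push_cast; ring)
        have hkey2 : Δ - t ^ 2 = s * (s + 2 * t) + (Δ - x₀ ^ 2) := by rw [hs_def]; ring
        rw [hkey2, V.v_add_eq_left, h2]
        rw [h2, hx₀]
        exact_mod_cast (by omega : (2 * j₂ : ℤ) < 2 * e)
  · refine ⟨0, ?_⟩
    have : Δ - t ^ 2 = Δ + (-(t ^ 2)) := by ring
    rw [this, V.v_add_eq_left, hΔu]
    · norm_num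
    rw [hnts, hΔu]
    exact_mod_cast (by omega : (0:ℤ) < 2 * j)

include he hΔu hΔd in
lemma norm_even {x y : F} (h : ¬ (x = 0 ∧ y = 0)) :
    ∃ k : ℤ, V.v (x ^ 2 - Δ * y ^ 2) = ((2 * k : ℤ) : WithTop ℤ) := by
  by_cases hy : y = 0
  · have hx : x ≠ 0 := fun hx => h ⟨hx, hy⟩
    obtain ⟨j, hj⟩ := V.exists_coe hx
    refine ⟨j, ?_⟩
    rw [hy]
    rw [(by ring : x ^ 2 - Δ * 0 ^ 2 = x ^ 2), V.v_sq, hj]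
    exact_mod_cast (by push_cast; ring)
  · obtain ⟨k, hk⟩ := V.delta_even he hΔu hΔd (x / y)
    obtain ⟨j, hj⟩ := V.exists_coe hy
    refine ⟨j + k, ?_⟩
    have hid : x ^ 2 - Δ * y ^ 2 = (-(y ^ 2)) * (Δ - (x / y) ^ 2) := by
      field_simp
      ring
    rw [hid, V.v_mul, V.v_neg, V.v_sq, hj, hk]
    exact_mod_cast (by push_cast; ring)

include he hΔu hΔd in
lemma norm_ne_zero {x y : F} (h : ¬ (x = 0 ∧ y = 0)) : x ^ 2 - Δ * y ^ 2 ≠ 0 := by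
  intro h0
  obtain ⟨k, hk⟩ := V.norm_even he hΔu hΔd h
  rw [h0, V.v_zero] at hk
  exact WithTop.coe_ne_top hk.symm

end NormDiscValuation


open QuadraticMap

variable {M M' : Type*} [AddCommGroup M] [AddCommGroup M'] [Module F M] [Module F M']

lemma IsometryEquiv.polar_map {Q₁ : QuadraticMap F M F} {Q₂ : QuadraticMap F M' F}
    (f : Q₁.IsometryEquiv Q₂) (x y : M) :
    polar Q₂ (f x) (f y) = polar Q₁ x y := by
  simp only [QuadraticMap.polar]
  rw [← map_add f, f.map_app, f.map_app, f.map_app]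

def reflMap (Q : QuadraticMap F M F) (w : M) : M →ₗ[F] M :=
  LinearMap.id - ((Q w)⁻¹ • (Q.polarBilin w)).smulRight w

lemma reflMap_apply (Q : QuadraticMap F M F) (w x : M) :
    reflMap Q w x = x - ((Q w)⁻¹ * polar Q w x) • w := rfl

lemma polar_self_eq (Q : QuadraticMap F M F) (w : M) : polar Q w w = 2 * Q w := by
  rw [polar_self, two_nsmul, two_mul]

lemma reflMap_invol (Q : QuadraticMap F M F) (w : M) (hw : Q w ≠ 0) :
    Function.Involutive (reflMap Q w) := by
  intro x
  rw [reflMap_apply, reflMap_apply]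
  have hp : polar Q w (x - ((Q w)⁻¹ * polar Q w x) • w) = - polar Q w x := by
    rw [polar_sub_right, polar_smul_right, polar_self_eq, smul_eq_mul]
    field_simp
    ring
  rw [hp]
  simp only [mul_neg, neg_smul, sub_neg_eq_add, sub_add_cancel]

lemma reflMap_app (Q : QuadraticMap F M F) (w : M) (hw : Q w ≠ 0) (x : M) :
    Q (reflMap Q w x) = Q x := by
  rw [reflMap_apply, sub_eq_add_neg, ← neg_smul, QuadraticMap.map_add ⇑Q, QuadraticMap.map_smul,
    polar_smul_right, polar_comm]
  simp only [smul_eq_mul]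
  field_simp
  ring

def reflQF (Q : QuadraticMap F M F) (w : M) (hw : Q w ≠ 0) : Q.IsometryEquiv Q where
  toLinearEquiv := LinearEquiv.ofInvolutive (reflMap Q w) (reflMap_invol Q w hw)
  map_app' := fun x => reflMap_app Q w hw x

lemma reflQF_apply (Q : QuadraticMap F M F) (w : M) (hw : Q w ≠ 0) (x : M) :
    reflQF Q w hw x = x - ((Q w)⁻¹ * polar Q w x) • w := rfl

def negQF (Q : QuadraticMap F M F) : Q.IsometryEquiv Q where
  toLinearEquiv := LinearEquiv.neg F
  map_app' := fun x => Q.map_neg x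

lemma negQF_apply (Q : QuadraticMap F M F) (x : M) : negQF Q x = -x := rfl

theorem exists_isometryEquiv (h2 : (2 : F) ≠ 0) (Q : QuadraticMap F M F) (u v : M)
    (huv : Q u = Q v) (hu : Q u ≠ 0) : ∃ σ : Q.IsometryEquiv Q, σ v = u := by
  have hvm : Q (v - u) = 2 * Q u - polar Q v u := by
    rw [sub_eq_add_neg, QuadraticMap.map_add ⇑Q, Q.map_neg, polar_neg_right, ← huv]
    ring
  have hvp : Q (v + u) = 2 * Q u + polar Q v u := by
    rw [QuadraticMap.map_add ⇑Q, ← huv]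
    ring
  by_cases hne : Q (v - u) = 0
  · -- use v + u
    have hne2 : Q (v + u) ≠ 0 := by
      intro h0
      have h4 : (2 * 2) * Q u = 0 := by
        linear_combination -hvm - hvp + hne + h0
      exact (mul_ne_zero (mul_ne_zero h2 h2) hu) h4
    have hpol : polar Q (v + u) v = Q (v + u) := by
      rw [polar_add_left, polar_self_eq, hvp, huv, polar_comm]
    refine ⟨(reflQF Q (v + u) hne2).trans (negQF Q), ?_⟩
    have : (reflQF Q (v + u) hne2) v = -u := by
      rw [reflQF_apply, hpol, inv_mul_cancel₀ hne2, one_smul]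
      abel
    calc ((reflQF Q (v + u) hne2).trans (negQF Q)) v
        = negQF Q ((reflQF Q (v + u) hne2) v) := rfl
      _ = u := by rw [this, negQF_apply, neg_neg]
  · have hpol : polar Q (v - u) v = Q (v - u) := by
      rw [polar_sub_left, polar_self_eq, hvm, huv, polar_comm]
    refine ⟨reflQF Q (v - u) hne, ?_⟩
    rw [reflQF_apply, hpol, inv_mul_cancel₀ hne, one_smul]
    abel

lemma aSq_apply (a x : F) : (a • (sq : QuadraticMap F F F)) x = a * (x * x) := by
  simp [QuadraticMap.smul_apply, smul_eq_mul]

lemma prod_aSq_apply (a : F) (q : QuadraticMap F M F) (p : F × M) :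
    ((a • (sq : QuadraticMap F F F)).prod q) p = a * (p.1 * p.1) + q p.2 := by
  rw [QuadraticMap.prod_apply, aSq_apply]

lemma polar_aSq (a t s : F) : polar (a • (sq : QuadraticMap F F F)) t s = 2 * a * t * s := by
  simp only [QuadraticMap.polar, aSq_apply]
  ring

theorem quad_cancel (h2 : (2 : F) ≠ 0) {a : F} (ha : a ≠ 0)
    (q : QuadraticMap F M F) (q' : QuadraticMap F M' F)
    (h : QuadraticMap.Equivalent ((a • (sq : QuadraticMap F F F)).prod q)
      ((a • (sq : QuadraticMap F F F)).prod q')) :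
    q.Equivalent q' := by
  set P : QuadraticMap F (F × M) F := (a • (sq : QuadraticMap F F F)).prod q with hP
  set P' : QuadraticMap F (F × M') F := (a • (sq : QuadraticMap F F F)).prod q' with hP'
  obtain ⟨f⟩ := h
  have hval : P' (f (1, 0)) = a := by
    rw [f.map_app, prod_aSq_apply]
    simp
  have hu : P' (1, 0) = a := by
    rw [prod_aSq_apply]; simp
  obtain ⟨σ, hσ⟩ := exists_isometryEquiv h2 P' (1, 0) (f (1, 0))
    (by rw [hval, hu]) (by rw [hu]; exact ha)
  set g : P.IsometryEquiv P' := f.trans σ with hg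
  set E : (F × M) ≃ₗ[F] (F × M') := g.toLinearEquiv with hE
  have hgE : ∀ x : F × M, g x = E x := fun _ => rfl
  have hEapp : ∀ x : F × M, P' (E x) = P x := fun x => g.map_app x
  have hg1 : E (1, (0 : M)) = (1, (0 : M')) := by
    rw [← hgE]
    show σ (f (1, 0)) = (1, 0)
    exact hσ
  have hfst : ∀ m : M, (E (0, m)).1 = 0 := by
    intro m
    have hp := IsometryEquiv.polar_map g (0, m) (1, 0)
    rw [hgE, hgE, hg1] at hp
    have hrhs : polar P ((0 : F), m) (1, (0 : M)) = 0 := by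
      rw [polar_prod, polar_aSq, polar_zero_right]
      ring
    have hlhs : polar P' (E (0, m)) (1, (0 : M')) = 2 * a * (E (0, m)).1 := by
      rw [polar_prod, polar_aSq, polar_zero_right, add_zero, mul_one]
    rw [hrhs, hlhs] at hp
    exact (mul_eq_zero.mp hp).resolve_left (mul_ne_zero h2 ha)
  have hg1' : E.symm (1, (0 : M')) = (1, (0 : M)) := by
    rw [← hg1, E.symm_apply_apply]
  have hfst' : ∀ m : M', (E.symm (0, m)).1 = 0 := by
    intro m
    have hp := IsometryEquiv.polar_map g (E.symm (0, m)) (1, 0)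
    rw [hgE, hgE, hg1, E.apply_symm_apply] at hp
    have hrhs : polar P' ((0 : F), m) (1, (0 : M')) = 0 := by
      rw [polar_prod, polar_aSq, polar_zero_right]
      ring
    have hlhs : polar P (E.symm (0, m)) (1, (0 : M)) = 2 * a * (E.symm (0, m)).1 := by
      rw [polar_prod, polar_aSq, polar_zero_right, add_zero, mul_one]
    rw [hrhs, hlhs] at hp
    exact (mul_eq_zero.mp hp.symm).resolve_left (mul_ne_zero h2 ha)
  have hgm : ∀ m : M, E (0, m) = (0, (E (0, m)).2) := fun m => Prod.ext (hfst m) rfl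
  have hgm' : ∀ m : M', E.symm (0, m) = (0, (E.symm (0, m)).2) :=
    fun m => Prod.ext (hfst' m) rfl
  refine ⟨⟨LinearEquiv.ofLinear
    ((LinearMap.snd F F M') ∘ₗ (E : F × M →ₗ[F] F × M') ∘ₗ (LinearMap.inr F F M))
    ((LinearMap.snd F F M) ∘ₗ (E.symm : F × M' →ₗ[F] F × M) ∘ₗ (LinearMap.inr F F M'))
    ?_ ?_, ?_⟩⟩
  · ext m
    simp only [LinearMap.coe_comp, Function.comp_apply, LinearMap.coe_inr, LinearMap.snd_apply,
      LinearEquiv.coe_coe, LinearMap.id_coe, id_eq]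
    rw [← hgm' m, E.apply_symm_apply]
  · ext m
    simp only [LinearMap.coe_comp, Function.comp_apply, LinearMap.coe_inr, LinearMap.snd_apply,
      LinearEquiv.coe_coe, LinearMap.id_coe, id_eq]
    rw [← hgm m, E.symm_apply_apply]
  · intro m
    show q' ((E (0, m)).2) = q m
    have h1 : q' ((E (0, m)).2) = P' ((0 : F), (E (0, m)).2) := by
      rw [prod_aSq_apply]
      ring
    rw [h1, ← hgm m, hEapp, prod_aSq_apply]
    ring

lemma diagQF_apply (n : ℕ) (w : Fin n → F) (x : Fin n → F) :
    diagQF n w x = ∑ i, w i * (x i * x i) := by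
  rw [diagQF, weightedSumSquares_apply]
  simp [smul_eq_mul]

/-- linear equivalence `Fin (n+1) → F  ≃  F × (Fin n → F)` -/
def splitEquiv (n : ℕ) : (Fin (n + 1) → F) ≃ₗ[F] F × (Fin n → F) where
  toFun x := (x 0, Fin.tail x)
  invFun p := Fin.cons p.1 p.2
  map_add' x y := by
    ext <;> simp [Fin.tail]
  map_smul' c x := by
    ext <;> simp [Fin.tail]
  left_inv x := by
    simp [Fin.cons_self_tail]
  right_inv p := by
    simp [Fin.tail_cons]

lemma diag_split_equivalent (n : ℕ) (a : F) (w : Fin n → F) :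
    (diagQF (n + 1) (Fin.cons a w)).Equivalent
      ((a • (sq : QuadraticMap F F F)).prod (diagQF n w)) := by
  refine ⟨⟨splitEquiv n, ?_⟩⟩
  intro x
  show ((a • (sq : QuadraticMap F F F)).prod (diagQF n w)) (x 0, Fin.tail x) = _
  rw [QuadraticMap.prod_apply, diagQF_apply, diagQF_apply]
  rw [Fin.sum_univ_succ]
  simp only [Fin.cons_zero, Fin.cons_succ, QuadraticMap.smul_apply, sq_apply, smul_eq_mul]
  rfl

theorem diag_cancel (h2 : (2 : F) ≠ 0) {a : F} (ha : a ≠ 0) {n : ℕ} (w w' : Fin n → F)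
    (h : (diagQF (n + 1) (Fin.cons a w)).Equivalent (diagQF (n + 1) (Fin.cons a w'))) :
    (diagQF n w).Equivalent (diagQF n w') := by
  refine quad_cancel h2 ha _ _ ?_
  exact ((diag_split_equivalent n a w).symm.trans h).trans (diag_split_equivalent n a w')


lemma padDiag_step (n : ℕ) (tail : List F) (h : tail.length ≤ n) :
    padDiag (n + 2) tail = Fin.cons 1 (Fin.cons (-1) (padDiag n tail)) := by
  funext i
  refine Fin.cases ?_ (fun j => ?_) i
  · have h0 : (0 : ℕ) < n + 2 - tail.length := by omega
    simp [padDiag, h0]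
  · refine Fin.cases ?_ (fun j' => ?_) j
    · have h1 : (1 : ℕ) < n + 2 - tail.length := by omega
      simp [padDiag, h1]
    · by_cases hc : (j' : ℕ) < n - tail.length
      · have hc2 : ((j' : ℕ) + 1 + 1) < n + 2 - tail.length := by omega
        have hp : ((j' : ℕ) + 1 + 1) % 2 = (j' : ℕ) % 2 := by omega
        simp [padDiag, hc, hc2, hp]
      · have hc2 : ¬ (((j' : ℕ) + 1 + 1) < n + 2 - tail.length) := by omega
        have hi : (j' : ℕ) + 1 + 1 - (n + 2 - tail.length) = (j' : ℕ) - (n - tail.length) := by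
          omega
        simp [padDiag, hc, hc2, hi]

theorem pad_descend (h2 : (2 : F) ≠ 0) (t1 t2 : List F) {k : ℕ}
    (hl1 : t1.length ≤ k) (hl2 : t2.length ≤ k) (m : ℕ)
    (h : (diagQF (k + 2 * m) (padDiag (k + 2 * m) t1)).Equivalent
         (diagQF (k + 2 * m) (padDiag (k + 2 * m) t2))) :
    (diagQF k (padDiag k t1)).Equivalent (diagQF k (padDiag k t2)) := by
  induction m with
  | zero => simpa using h
  | succ m ih =>
    apply ih
    have heq : k + 2 * (m + 1) = (k + 2 * m) + 2 := by ring
    rw [heq] at h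
    rw [padDiag_step _ t1 (by omega), padDiag_step _ t2 (by omega)] at h
    have h' := diag_cancel h2 (one_ne_zero) _ _ h
    exact diag_cancel h2 (neg_ne_zero.mpr one_ne_zero) _ _ h'

lemma padDiag_prod (t : List F) (k : ℕ) (hk : t.length ≤ k) (m : ℕ) :
    (∏ i, padDiag (k + 2 * m) t i) = (-1 : F) ^ m * ∏ i, padDiag k t i := by
  induction m with
  | zero => simp
  | succ m ih =>
    have heq : k + 2 * (m + 1) = (k + 2 * m) + 2 := by ring
    rw [heq, padDiag_step _ t (by omega), Fin.prod_cons, Fin.prod_cons, ih]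
    ring

lemma padDiag_two (b c : F) : padDiag 2 [b, c] = ![b, c] := by
  funext i
  fin_cases i <;> simp [padDiag]

lemma padDiag_four (b c d e : F) : padDiag 4 [b, c, d, e] = ![b, c, d, e] := by
  funext i
  fin_cases i <;> simp [padDiag]

lemma equivalent_represents {M M' : Type*} [AddCommGroup M] [AddCommGroup M']
    [Module F M] [Module F M'] {Q : QuadraticMap F M F} {Q' : QuadraticMap F M' F}
    (h : Q.Equivalent Q') (c : F) (hc : ∃ x, Q' x = c) : ∃ y, Q y = c := by
  obtain ⟨f⟩ := h
  obtain ⟨x, hx⟩ := hc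
  exact ⟨f.symm x, (f.symm.map_app x).trans hx⟩

lemma equivalent_isotropic {M M' : Type*} [AddCommGroup M] [AddCommGroup M']
    [Module F M] [Module F M'] {Q : QuadraticMap F M F} {Q' : QuadraticMap F M' F}
    (h : Q.Equivalent Q') (hx : ∃ x, x ≠ 0 ∧ Q' x = 0) : ∃ y, y ≠ 0 ∧ Q y = 0 := by
  obtain ⟨f⟩ := h
  obtain ⟨x, hx0, hx⟩ := hx
  refine ⟨f.symm x, ?_, (f.symm.map_app x).trans hx⟩
  intro h0
  exact hx0 (f.symm.toLinearEquiv.map_eq_zero_iff.mp h0)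

lemma diag_two_apply (b c : F) (x : Fin 2 → F) :
    diagQF 2 ![b, c] x = b * (x 0 * x 0) + c * (x 1 * x 1) := by
  rw [diagQF_apply, Fin.sum_univ_two]
  simp

lemma diag_four_apply (b c d e : F) (x : Fin 4 → F) :
    diagQF 4 ![b, c, d, e] x = b * (x 0 * x 0) + c * (x 1 * x 1) + d * (x 2 * x 2)
      + e * (x 3 * x 3) := by
  rw [diagQF_apply, Fin.sum_univ_four]
  simp


lemma padDiag_four' (b c : F) : padDiag 4 [b, c] = ![1, -1, b, c] := by
  funext i
  fin_cases i <;> simp [padDiag]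

lemma prod_pad_two (b c : F) : (∏ i, padDiag 2 [b, c] i) = b * c := by
  rw [padDiag_two, Fin.prod_univ_two]
  simp

lemma prod_pad_four (b c d e : F) : (∏ i, padDiag 4 [b, c, d, e] i) = b * c * d * e := by
  rw [padDiag_four, Fin.prod_univ_four]
  simp

lemma case2_core (V : NormDiscValuation F) {e : ℤ} (he : V.v 2 = (e : WithTop ℤ))
    {π Δ : F} (hπ : V.v π = ((1 : ℤ) : WithTop ℤ)) (hΔu : V.v Δ = (0 : WithTop ℤ))
    (hΔd : relDefect V Δ = ((2 * e : ℤ) : WithTop ℤ)) (u v : F) :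
    π * (u * u) + (-Δ * π) * (v * v) ≠ 1 := by
  intro heq
  by_cases h00 : u = 0 ∧ v = 0
  · rw [h00.1, h00.2] at heq
    norm_num at heq
  · obtain ⟨k, hk⟩ := V.norm_even he hΔu hΔd h00
    have hA : π * (u ^ 2 - Δ * v ^ 2) = 1 := by linear_combination heq
    have h1 := congrArg V.v hA
    rw [V.v_mul, hπ, hk, V.v_one] at h1
    have h3 : (1 + 2 * k : ℤ) = 0 := by exact_mod_cast h1
    omega

lemma case3_core (h2 : (2 : F) ≠ 0) {a δ : F} (hH : ¬ HilbertOne a δ) (ha : a ≠ 0)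
    (u v : F) : a * (u * u) + (-a * δ) * (v * v) ≠ 1 := by
  intro heq
  apply hH
  by_cases hu : u = 0
  · have hv : v ≠ 0 := by
      intro hv
      rw [hu, hv] at heq
      norm_num at heq
    have hrel : a * δ * v ^ 2 = -1 := by
      rw [hu] at heq
      linear_combination -heq
    refine ⟨(1 + a * v ^ 2) / (2 * a * v), (a * v ^ 2 - 1) / 2, ?_⟩
    have h4 : (2 * a * v) ≠ 0 := mul_ne_zero (mul_ne_zero h2 ha) hv
    field_simp
    linear_combination ((a * v ^ 2 - 1) ^ 2) * hrel
  · refine ⟨(u ^ 2 - δ * v ^ 2) / u, v / u, ?_⟩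
    have heq' : a * (u ^ 2 - δ * v ^ 2) = 1 := by linear_combination heq
    field_simp
    linear_combination (u ^ 2 - δ * v ^ 2) * heq'

lemma case4_core (V : NormDiscValuation F) {e : ℤ} (he : V.v 2 = (e : WithTop ℤ))
    {π Δ : F} (hπ : V.v π = ((1 : ℤ) : WithTop ℤ)) (hΔu : V.v Δ = (0 : WithTop ℤ))
    (hΔd : relDefect V Δ = ((2 * e : ℤ) : WithTop ℤ)) {δ : F} (hδ : V.v δ = (0 : WithTop ℤ))
    (u v : F) : Δ * (u * u) + (-Δ * δ * π) * (v * v) ≠ 1 := by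
  intro heq
  by_cases hv : v = 0
  · have hu : u ≠ 0 := by
      intro hu
      rw [hu, hv] at heq
      norm_num at heq
    apply V.delta_not_sq hΔu hΔd (1 / u)
    have h3 : Δ * (u * u) = 1 := by
      rw [hv] at heq
      linear_combination heq
    rw [div_pow, one_pow, eq_div_iff (pow_ne_zero 2 hu)]
    linear_combination h3
  · obtain ⟨jv, hjv⟩ := V.exists_coe hv
    have hR : V.v (Δ * δ * π * (v * v)) = ((1 + 2 * jv : ℤ) : WithTop ℤ) := by
      rw [V.v_mul, V.v_mul, V.v_mul, V.v_mul, hΔu, hδ, hπ, hjv]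
      exact_mod_cast (by push_cast; ring)
    by_cases hu : u = 0
    · have hA : Δ * δ * π * (v * v) = -1 := by
        rw [hu] at heq
        linear_combination -heq
      have h1 := congrArg V.v hA
      rw [hR, V.v_neg_one] at h1
      have h3 : (1 + 2 * jv : ℤ) = 0 := by exact_mod_cast h1
      omega
    · obtain ⟨ju, hju⟩ := V.exists_coe hu
      obtain ⟨k, hk⟩ := V.delta_even he hΔu hΔd (1 / u)
      have hL : u ^ 2 * (Δ - (1 / u) ^ 2) = Δ * δ * π * (v * v) := by
        have hA : Δ * (u * u) - 1 = Δ * δ * π * (v * v) := by linear_combination heq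
        have hinv : u ^ 2 * (1 / u) ^ 2 = 1 := by
          field_simp
        calc u ^ 2 * (Δ - (1 / u) ^ 2) = Δ * (u * u) - u ^ 2 * (1 / u) ^ 2 := by ring
          _ = Δ * (u * u) - 1 := by rw [hinv]
          _ = Δ * δ * π * (v * v) := hA
      have h1 := congrArg V.v hL
      rw [V.v_mul, V.v_sq, hju, hk, hR] at h1
      have h3 : (ju + ju + 2 * k : ℤ) = 1 + 2 * jv := by exact_mod_cast h1
      omega

lemma case1_core (V : NormDiscValuation F) {e : ℤ} (he : V.v 2 = (e : WithTop ℤ))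
    {π Δ : F} (hπ : V.v π = ((1 : ℤ) : WithTop ℤ)) (hΔu : V.v Δ = (0 : WithTop ℤ))
    (hΔd : relDefect V Δ = ((2 * e : ℤ) : WithTop ℤ)) (hπ0 : π ≠ 0) (a b c d : F)
    (h : 1 * (a * a) + (-Δ) * (b * b) + π * (c * c) + (-Δ * π) * (d * d) = 0) :
    a = 0 ∧ b = 0 ∧ c = 0 ∧ d = 0 := by
  have hA : a ^ 2 - Δ * b ^ 2 = -(π * (c ^ 2 - Δ * d ^ 2)) := by linear_combination h
  by_cases hab : a = 0 ∧ b = 0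
  · by_cases hcd : c = 0 ∧ d = 0
    · exact ⟨hab.1, hab.2, hcd.1, hcd.2⟩
    · exfalso
      have hB := V.norm_ne_zero he hΔu hΔd hcd
      have h0 : π * (c ^ 2 - Δ * d ^ 2) = 0 := by
        rw [hab.1, hab.2] at hA
        linear_combination hA
      exact (mul_ne_zero hπ0 hB) h0
  · exfalso
    by_cases hcd : c = 0 ∧ d = 0
    · have h0 : a ^ 2 - Δ * b ^ 2 = 0 := by
        rw [hcd.1, hcd.2] at hA
        linear_combination hA
      exact (V.norm_ne_zero he hΔu hΔd hab) h0
    · obtain ⟨k1, hk1⟩ := V.norm_even he hΔu hΔd hab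
      obtain ⟨k2, hk2⟩ := V.norm_even he hΔu hΔd hcd
      have h1 := congrArg V.v hA
      rw [V.v_neg, V.v_mul, hπ, hk1, hk2] at h1
      have h3 : (2 * k1 : ℤ) = 1 + 2 * k2 := by exact_mod_cast h1
      omega


end Aux

/-- explicit description of `W₂ⁿ(c)` for even `n`: in each case the listed
space has determinant `(-1)^{n/2} c` and is not isometric to `W₁ⁿ(c) = ℍ^{(n-2)/2} ⊥ [1,-c]`,
hence represents the second isometry class with that determinant. -/
theorem W2_even_description [Field F] [Algebra ℚ_[2] F] [FiniteDimensional ℚ_[2] F]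
    (V : NormDiscValuation F) (e : ℤ) (he : V.v 2 = (e : WithTop ℤ))
    (π Δ : F) (hπ : V.v π = ((1 : ℤ) : WithTop ℤ))
    (hΔu : V.v Δ = (0 : WithTop ℤ)) (hΔd : relDefect V Δ = ((2 * e : ℤ) : WithTop ℤ))
    (n : ℕ) (hn2 : 2 ≤ n) (hne : Even n) :
    (4 ≤ n →
      DetEq (padDiag n [1, -Δ, π, -Δ * π]) ((-1 : F) ^ (n / 2)) ∧
      ¬ QuadraticMap.Equivalent (diagQF n (padDiag n [1, -Δ, π, -Δ * π]))
          (diagQF n (padDiag n ([1, -1] : List F)))) ∧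
    (DetEq (padDiag n [π, -Δ * π]) ((-1 : F) ^ (n / 2) * Δ) ∧
      ¬ QuadraticMap.Equivalent (diagQF n (padDiag n [π, -Δ * π]))
          (diagQF n (padDiag n [1, -Δ]))) ∧
    (∀ δ δsharp : F, V.v δ = (0 : WithTop ℤ) → ¬ IsSquare δ → (¬ ∃ t : F, δ = Δ * t ^ 2) →
      V.v δsharp = (0 : WithTop ℤ) → ¬ HilbertOne δsharp δ →
      DetEq (padDiag n [δsharp, -δsharp * δ]) ((-1 : F) ^ (n / 2) * δ) ∧
      ¬ QuadraticMap.Equivalent (diagQF n (padDiag n [δsharp, -δsharp * δ]))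
          (diagQF n (padDiag n [1, -δ]))) ∧
    (∀ δ : F, V.v δ = (0 : WithTop ℤ) →
      DetEq (padDiag n [Δ, -Δ * δ * π]) ((-1 : F) ^ (n / 2) * δ * π) ∧
      ¬ QuadraticMap.Equivalent (diagQF n (padDiag n [Δ, -Δ * δ * π]))
          (diagQF n (padDiag n [1, -δ * π]))) := by
  haveI hchar : CharZero F := charZero_of_injective_algebraMap (algebraMap ℚ_[2] F).injective
  have h2 : (2 : F) ≠ 0 := two_ne_zero
  have hπ0 : π ≠ 0 := V.v_ne_zero (by rw [hπ]; exact WithTop.coe_ne_top)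
  have hΔ0 : Δ ≠ 0 := V.v_ne_zero (by rw [hΔu]; exact WithTop.coe_ne_top)
  obtain ⟨m, rfl⟩ : ∃ m, n = 2 + 2 * m := by
    obtain ⟨j, hj⟩ := hne
    exact ⟨j - 1, by omega⟩
  have hdiv : (2 + 2 * m) / 2 = m + 1 := by omega
  refine ⟨?_, ⟨?_, ?_⟩, ?_, ?_⟩
  · -- case c = 1, n ≥ 4
    intro h4
    obtain ⟨m', hm'⟩ : ∃ m', m = 1 + m' := ⟨m - 1, by omega⟩
    subst hm'
    have heq4 : 2 + 2 * (1 + m') = 4 + 2 * m' := by ring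
    constructor
    · refine ⟨Δ * π, mul_ne_zero hΔ0 hπ0, ?_⟩
      rw [heq4, padDiag_prod _ 4 (by simp) m', prod_pad_four,
        show (4 + 2 * m') / 2 = 2 + m' from by omega, pow_add]
      ring
    · intro h
      rw [heq4] at h
      have hb := pad_descend h2 _ _ (by simp) (by simp) m' h
      rw [padDiag_four, padDiag_four'] at hb
      obtain ⟨y, hy0, hy⟩ := equivalent_isotropic hb
        ⟨![1, 1, 0, 0], by
          intro hh
          have h00 := congrFun hh 0
          norm_num at h00, by rw [diag_four_apply]; simp⟩
      rw [diag_four_apply] at hy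
      obtain ⟨e0, e1, e2, e3⟩ := case1_core V he hπ hΔu hΔd hπ0 (y 0) (y 1) (y 2) (y 3) hy
      apply hy0
      funext i
      fin_cases i
      · exact e0
      · exact e1
      · exact e2
      · exact e3
  · -- case c = Δ : determinant
    refine ⟨π, hπ0, ?_⟩
    rw [padDiag_prod _ 2 (by simp) m, prod_pad_two, hdiv, pow_succ]
    ring
  · -- case c = Δ : non-isometry
    intro h
    have hb := pad_descend h2 _ _ (by simp) (by simp) m h
    rw [padDiag_two, padDiag_two] at hb
    obtain ⟨x, hx⟩ := equivalent_represents hb 1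
      ⟨![1, 0], by rw [diag_two_apply]; norm_num⟩
    rw [diag_two_apply] at hx
    exact case2_core V he hπ hΔu hΔd (x 0) (x 1) hx
  · -- case c = δ a unit
    intro δ δs hδv _hs _hc hδsv hH
    have hδs0 : δs ≠ 0 := V.v_ne_zero (by rw [hδsv]; exact WithTop.coe_ne_top)
    constructor
    · refine ⟨δs, hδs0, ?_⟩
      rw [padDiag_prod _ 2 (by simp) m, prod_pad_two, hdiv, pow_succ]
      ring
    · intro h
      have hb := pad_descend h2 _ _ (by simp) (by simp) m h
      rw [padDiag_two, padDiag_two] at hb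
      obtain ⟨x, hx⟩ := equivalent_represents hb 1
        ⟨![1, 0], by rw [diag_two_apply]; norm_num⟩
      rw [diag_two_apply] at hx
      exact case3_core h2 hH hδs0 (x 0) (x 1) hx
  · -- case c = δπ
    intro δ hδv
    constructor
    · refine ⟨Δ, hΔ0, ?_⟩
      rw [padDiag_prod _ 2 (by simp) m, prod_pad_two, hdiv, pow_succ]
      ring
    · intro h
      have hb := pad_descend h2 _ _ (by simp) (by simp) m h
      rw [padDiag_two, padDiag_two] at hb
      obtain ⟨x, hx⟩ := equivalent_represents hb 1
        ⟨![1, 0], by rw [diag_two_apply]; norm_num⟩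
      rw [diag_two_apply] at hx
      exact case4_core V he hπ hΔu hΔd hδv (x 0) (x 1) hx
end
end

section
/- Let F be a dyadic local field with e = ord(2) and let M ≅ ≺a₁,…,a_m≻ be an integral 𝒪_F-lattice relative to a good BONG with R_i = ord(a_i). If R_j = 0 for some odd index j, then R_i = 0 for all odd i ≤ j, and R_i is even for all 1 ≤ i ≤ j. -/
noncomputable section
open scoped Classical

variable {F : Type*}

lemma my_v_one [Field F] (V : NormDiscValuation F) : V.v 1 = 0 := by
  have h := V.v_mul 1 1
  rw [one_mul] at h
  lift V.v (1 : F) to ℤ using V.v_ne_top 1 one_ne_zero with k hk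
  have h1 : k = k + k := by exact_mod_cast h
  have h2 : k = 0 := by omega
  exact_mod_cast h2

lemma my_v_neg [Field F] (V : NormDiscValuation F) (x : F) : V.v (-x) = V.v x := by
  have hm := V.v_mul (-1 : F) (-1)
  rw [neg_mul_neg, one_mul, my_v_one] at hm
  have hmx := V.v_mul (-1 : F) x
  rw [neg_one_mul] at hmx
  lift V.v (-1 : F) to ℤ using V.v_ne_top _ (by norm_num) with k hk
  have hkk : (0 : ℤ) = k + k := by exact_mod_cast hm
  have hk0 : k = 0 := by omega
  rw [hmx, hk0]
  simp

lemma my_v_add_eq_left [Field F] (V : NormDiscValuation F) (x y : F)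
    (h : V.v x < V.v y) : V.v (x + y) = V.v x := by
  refine le_antisymm ?_ (le_trans (le_min le_rfl h.le) (V.v_add x y))
  by_contra hlt
  push_neg at hlt
  have h2 := V.v_add (x + y) (-y)
  rw [my_v_neg, add_neg_cancel_right] at h2
  exact absurd h2 (not_le.mpr (lt_min hlt h))

lemma my_relDefect_odd [Field F] (V : NormDiscValuation F) (c : F) (k : ℤ)
    (hk : Odd k) (hc : V.v c = (k : WithTop ℤ)) : relDefect V c = 0 := by
  have hc0 : c ≠ 0 := by
    intro h; rw [h, V.v_zero] at hc; exact (by simp : (⊤ : WithTop ℤ) ≠ (k:WithTop ℤ)) hc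
  have key : ∀ x : F, V.v ((c - x ^ 2) / c) ≤ 0 := by
    intro x
    have hsub : V.v (c - x ^ 2) ≤ V.v c := by
      have hne : V.v (x ^ 2) ≠ V.v c := by
        rw [hc, pow_two, V.v_mul]
        rcases eq_or_ne (V.v x) ⊤ with h | h
        · simp [h]
        · lift V.v x to ℤ using h with n
          intro hcon
          have : n + n = k := by exact_mod_cast hcon
          rcases hk with ⟨t, ht⟩; omega
      rcases lt_or_gt_of_ne hne with h | h
      · have := my_v_add_eq_left V (x^2 * -1) c (by rwa [mul_neg_one, my_v_neg])
        rw [show x^2 * -1 + c = c - x^2 by ring, mul_neg_one, my_v_neg] at this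
        rw [this]; exact h.le
      · have := my_v_add_eq_left V c (x^2 * -1) (by rwa [mul_neg_one, my_v_neg])
        rw [show c + x^2 * -1 = c - x^2 by ring] at this
        rw [this]
    have hmul : V.v ((c - x^2)/c) + V.v c = V.v (c - x^2) := by
      rw [← V.v_mul, div_mul_cancel₀ _ hc0]
    have hfin : V.v c ≠ ⊤ := by rw [hc]; simp
    have h2 : V.v ((c - x^2)/c) + V.v c ≤ 0 + V.v c := by
      rw [hmul, zero_add]; exact hsub
    exact (WithTop.add_le_add_iff_right hfin).mp h2
  unfold relDefect
  refine le_antisymm (ciSup_le key) ?_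
  have h0 : V.v ((c - (0:F) ^ 2) / c) = 0 := by
    rw [show (0:F)^2 = 0 by ring, sub_zero, div_self hc0, my_v_one]
  calc (0:WithTop ℤ) = V.v ((c - (0:F)^2)/c) := h0.symm
    _ ≤ _ := le_ciSup (f := fun x : F => V.v ((c - x ^ 2)/c)) (OrderTop.bddAbove _) (0:F)

/-- for an integral lattice with good BONG, if `R_j = 0` for some odd
`j ≤ m`, then `R_i = 0` for all odd `i ≤ j` and `R_i` is even for all `1 ≤ i ≤ j`. -/
theorem bong_integral_R_zero_prop [Field F] [Algebra ℚ_[2] F] [FiniteDimensional ℚ_[2] F]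
    (V : NormDiscValuation F) (e : ℤ) (he : V.v 2 = (e : WithTop ℤ))
    (m : ℕ) (a : ℕ → F) (R : ℕ → ℤ)
    (hne : ∀ i, 1 ≤ i → i ≤ m → a i ≠ 0)
    (hval : ∀ i, 1 ≤ i → i ≤ m → V.v (a i) = (R i : WithTop ℤ))
    (hgood : ∀ i, 1 ≤ i → i + 2 ≤ m → R i ≤ R (i + 2))
    (hbong₁ : ∀ i, 1 ≤ i → i + 1 ≤ m →
      (0 : WithTop ℤ) ≤ ((R (i + 1) - R i : ℤ) : WithTop ℤ)
        + relDefect V (-(a i * a (i + 1))))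
    (hbong₂ : ∀ i, 1 ≤ i → i + 1 ≤ m → -(2 * e) ≤ R (i + 1) - R i)
    (hint : 0 ≤ R 1) (j : ℕ) (hjodd : Odd j) (hjm : j ≤ m) (hRj : R j = 0) :
    (∀ i, Odd i → i ≤ j → R i = 0) ∧ (∀ i, 1 ≤ i → i ≤ j → Even (R i)) := by
  -- monotonicity along indices of the same parity
  have hchain : ∀ d i, 1 ≤ i → i + 2*d ≤ m → R i ≤ R (i + 2*d) := by
    intro d
    induction d with
    | zero => intro i _ _; simp
    | succ n ih =>
      intro i h1 h2
      have hA : R i ≤ R (i + 2) := hgood i h1 (by omega)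
      have hB : R (i+2) ≤ R (i + 2 + 2*n) := ih (i+2) (by omega) (by omega)
      have hC : i + 2*(n+1) = i + 2 + 2*n := by ring
      rw [hC]; omega
  -- part 1 : odd indices
  have hodd : ∀ i, Odd i → i ≤ j → R i = 0 := by
    intro i hi hij
    obtain ⟨ci, rfl⟩ := hi
    obtain ⟨cj, hcj⟩ := hjodd
    have h1 : R (2*ci+1) ≤ R j := by
      have := hchain (cj - ci) (2*ci+1) (by omega) (by omega)
      rwa [show 2*ci+1 + 2*(cj - ci) = j by omega] at this
    have h2 : R 1 ≤ R (2*ci+1) := by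
      have := hchain ci 1 le_rfl (by omega)
      rwa [show 1 + 2*ci = 2*ci+1 by omega] at this
    omega
  -- key parity fact: an odd jump is nonnegative
  have hpar : ∀ i, 1 ≤ i → i + 1 ≤ m → Odd (R (i+1) - R i) → 0 ≤ R (i+1) - R i := by
    intro i h1 h2 hoddd
    have hv : V.v (-(a i * a (i+1))) = ((R i + R (i+1) : ℤ) : WithTop ℤ) := by
      rw [my_v_neg, V.v_mul, hval i h1 (by omega), hval (i+1) (by omega) h2]
      exact_mod_cast rfl
    have hsum : Odd (R i + R (i+1)) := by
      obtain ⟨t, ht⟩ := hoddd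
      exact ⟨R i + t, by omega⟩
    have hd0 : relDefect V (-(a i * a (i+1))) = 0 := my_relDefect_odd V _ _ hsum hv
    have := hbong₁ i h1 h2
    rw [hd0, add_zero] at this
    exact_mod_cast this
  refine ⟨hodd, ?_⟩
  intro i h1 hij
  rcases Nat.even_or_odd i with hev | hio
  · -- i even: show R i = 0
    obtain ⟨p, rfl⟩ : ∃ p, i = p + 1 := ⟨i - 1, by omega⟩
    have hpodd : Odd p := by
      obtain ⟨r, hr⟩ := hev; exact ⟨r - 1, by omega⟩
    have hp1 : 1 ≤ p := by obtain ⟨t, ht⟩ := hpodd; omega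
    have hlt : p + 1 < j := by
      rcases Nat.lt_or_ge (p+1) j with h | h
      · exact h
      · exfalso
        have : p + 1 = j := by omega
        obtain ⟨t, ht⟩ := hjodd; obtain ⟨s, hs⟩ := hpodd; omega
    have hRp : R p = 0 := hodd p hpodd (by omega)
    have hRp2 : R (p+2) = 0 := by
      have : Odd (p+2) := by obtain ⟨t, ht⟩ := hpodd; exact ⟨t+1, by omega⟩
      exact hodd (p+2) this (by omega)
    by_contra hneE
    have hoi : Odd (R (p+1)) := Int.not_even_iff_odd.mp hneE
    have hge : 0 ≤ R (p+1) - R p :=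
      hpar p hp1 (by omega) (by rw [hRp]; simpa using hoi)
    have hle : 0 ≤ R (p+2) - R (p+1) := by
      have : Odd (R (p+1+1) - R (p+1)) := by
        rw [show p+1+1 = p+2 by omega, hRp2]
        obtain ⟨t, ht⟩ := hoi; exact ⟨-t-1, by omega⟩
      have := hpar (p+1) (by omega) (by omega) this
      rwa [show p+1+1 = p+2 by omega] at this
    have : R (p+1) = 0 := by omega
    obtain ⟨t, ht⟩ := hoi; omega
  · rw [hodd i hio hij]; exact Even.zero
end
end
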